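/- Let K be a field, F ⊆ K[T_1,...,T_r] finite, g ∈ K[T_1,...,T_r], and let f = h·T_n^m + c with h ∈ K[T_{n+1},...,T_r], c having T_n-degree less than m. Suppose h' ∈ K[T_{n+1},...,T_r] satisfies h·h' − 1 ∈ √⟨F⟩ : g. Then √(⟨F⟩ + ⟨f⟩) : g = √(⟨F⟩ + ⟨T_n^m + h'·c⟩) : g, and consequently V(F ∪ {f}) \ V(g) = V(F ∪ {T_n^m + h'c}) \ V(g). -/
import Mathlib

lemma colon_radical_le_of_mul_mem {R : Type*} [CommRing R] (I : Ideal R) (g f f' : R)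
    (hf' : f' * g ∈ (I + Ideal.span {f}).radical) :
    ((I + Ideal.span {f'}).radical).colon (Ideal.span {g}) ≤
      ((I + Ideal.span {f}).radical).colon (Ideal.span {g}) := by
  intro x hx
  rw [Ideal.mem_colon_span_singleton] at hx ⊢
  obtain ⟨k, hk⟩ := hx
  rw [Ideal.add_eq_sup, Submodule.mem_sup] at hk
  obtain ⟨y, hy, z, hz, hyz⟩ := hk
  rw [Ideal.mem_span_singleton'] at hz
  obtain ⟨a, ha⟩ := hz
  have key : (x * g) ^ (k + 1) ∈ (I + Ideal.span {f}).radical := by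
    have e : (x * g) ^ (k + 1) = y * (x * g) + (a * x) * (f' * g) := by
      rw [pow_succ, ← hyz, ← ha]; ring
    rw [e]
    refine Ideal.add_mem _ ?_ (Ideal.mul_mem_left _ _ hf')
    exact Ideal.mul_mem_right _ _
      (Ideal.le_radical (by rw [Ideal.add_eq_sup]; exact Ideal.mem_sup_left hy))
  have hx2 : x * g ∈ ((I + Ideal.span {f}).radical).radical := ⟨k + 1, key⟩
  rwa [Ideal.radical_idem] at hx2

lemma aeval_eq_zero_of_mem_radical_span {K L : Type*} [Field K] [Field L] [Algebra K L]
    {r : ℕ} {F : Finset (MvPolynomial (Fin r) K)} {x : Fin r → L}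
    (hx : ∀ p ∈ F, MvPolynomial.aeval x p = 0) {q : MvPolynomial (Fin r) K}
    (hq : q ∈ (Ideal.span (F : Set (MvPolynomial (Fin r) K))).radical) :
    MvPolynomial.aeval x q = 0 := by
  obtain ⟨k, hk⟩ := hq
  have hsub : Ideal.span (F : Set (MvPolynomial (Fin r) K)) ≤
      RingHom.ker (MvPolynomial.aeval x : MvPolynomial (Fin r) K →ₐ[K] L) :=
    Ideal.span_le.mpr fun p hp => hx p hp
  have h0 : (MvPolynomial.aeval x q) ^ k = 0 := by
    have := hsub hk
    rw [RingHom.mem_ker] at this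
    simpa using this
  rcases Nat.eq_zero_or_pos k with rfl | hk0
  · simp at h0
  · exact pow_eq_zero_iff hk0.ne' |>.mp h0

/-- Making a triangular system monic: if `f = h·T_n^m + c` with `h ∈ K[T_{n+1},…,T_r]`,
`deg_{T_n} c < m`, and `h·h' - 1 ∈ √⟨F⟩ : g` for some `h' ∈ K[T_{n+1},…,T_r]`, then
`√(⟨F⟩+⟨f⟩) : g = √(⟨F⟩+⟨T_n^m + h'·c⟩) : g` and consequently
`V(F ∪ {f}) \ V(g) = V(F ∪ {T_n^m + h'c}) \ V(g)`. -/
theorem make_monic_preserves_saturated_radical {K : Type*} [Field K] {r : ℕ}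
    (F : Finset (MvPolynomial (Fin r) K)) (g : MvPolynomial (Fin r) K)
    (n : Fin r) (m : ℕ) (h c h' : MvPolynomial (Fin r) K)
    (hh : h ∈ MvPolynomial.supported K {j : Fin r | n < j})
    (hcdeg : MvPolynomial.degreeOf n c < m)
    (hh' : h' ∈ MvPolynomial.supported K {j : Fin r | n < j})
    (hinv : h * h' - 1 ∈
      ((Ideal.span (F : Set (MvPolynomial (Fin r) K))).radical).colon (Ideal.span {g})) :
    ((Ideal.span (F : Set (MvPolynomial (Fin r) K)) +
          Ideal.span {h * MvPolynomial.X n ^ m + c}).radical).colon (Ideal.span {g}) =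
      ((Ideal.span (F : Set (MvPolynomial (Fin r) K)) +
          Ideal.span {MvPolynomial.X n ^ m + h' * c}).radical).colon (Ideal.span {g}) ∧
    {x : Fin r → AlgebraicClosure K |
        ((∀ p ∈ F, MvPolynomial.aeval x p = 0) ∧
            MvPolynomial.aeval x (h * MvPolynomial.X n ^ m + c) = 0) ∧
          MvPolynomial.aeval x g ≠ 0} =
      {x : Fin r → AlgebraicClosure K |
        ((∀ p ∈ F, MvPolynomial.aeval x p = 0) ∧
            MvPolynomial.aeval x (MvPolynomial.X n ^ m + h' * c) = 0) ∧
          MvPolynomial.aeval x g ≠ 0} := by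
  set I : Ideal (MvPolynomial (Fin r) K) := Ideal.span (F : Set (MvPolynomial (Fin r) K))
  set f : MvPolynomial (Fin r) K := h * MvPolynomial.X n ^ m + c with hf_def
  set f' : MvPolynomial (Fin r) K := MvPolynomial.X n ^ m + h' * c with hf'_def
  have hinvg : (h * h' - 1) * g ∈ I.radical := Ideal.mem_colon_span_singleton.mp hinv
  -- memberships of f, f' in the respective radicals
  have hfmem : ∀ q : MvPolynomial (Fin r) K, q * g ∈ (I + Ideal.span {q}).radical := by
    intro q
    refine Ideal.le_radical ?_
    exact Ideal.mul_mem_right _ _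
      (by rw [Ideal.add_eq_sup]; exact Ideal.mem_sup_right (Ideal.mem_span_singleton_self q))
  have hradmono : ∀ q : MvPolynomial (Fin r) K, I.radical ≤ (I + Ideal.span {q}).radical :=
    fun q => Ideal.radical_mono (by rw [Ideal.add_eq_sup]; exact le_sup_left)
  have hf'g : f' * g ∈ (I + Ideal.span {f}).radical := by
    have e : f' * g = h' * (f * g) - MvPolynomial.X n ^ m * ((h * h' - 1) * g) := by
      rw [hf_def, hf'_def]; ring
    rw [e]
    exact Ideal.sub_mem _ (Ideal.mul_mem_left _ _ (hfmem f))
      (Ideal.mul_mem_left _ _ (hradmono f hinvg))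
  have hfg : f * g ∈ (I + Ideal.span {f'}).radical := by
    have e : f * g = h * (f' * g) - c * ((h * h' - 1) * g) := by
      rw [hf_def, hf'_def]; ring
    rw [e]
    exact Ideal.sub_mem _ (Ideal.mul_mem_left _ _ (hfmem f'))
      (Ideal.mul_mem_left _ _ (hradmono f' hinvg))
  constructor
  · exact le_antisymm (colon_radical_le_of_mul_mem I g f' f hfg)
      (colon_radical_le_of_mul_mem I g f f' hf'g)
  · ext x
    simp only [Set.mem_setOf_eq]
    constructor
    · rintro ⟨⟨hF, hfx⟩, hg⟩
      refine ⟨⟨hF, ?_⟩, hg⟩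
      have hz : MvPolynomial.aeval x ((h * h' - 1) * g) = 0 :=
        aeval_eq_zero_of_mem_radical_span hF hinvg
      rw [map_mul] at hz
      have hz' : MvPolynomial.aeval x (h * h' - 1) = 0 :=
        (mul_eq_zero.mp hz).resolve_right hg
      have e : f' = h' * f - (h * h' - 1) * MvPolynomial.X n ^ m := by
        rw [hf_def, hf'_def]; ring
      rw [e, map_sub, map_mul, hfx, map_mul, hz']
      ring
    · rintro ⟨⟨hF, hfx⟩, hg⟩
      refine ⟨⟨hF, ?_⟩, hg⟩
      have hz : MvPolynomial.aeval x ((h * h' - 1) * g) = 0 :=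
        aeval_eq_zero_of_mem_radical_span hF hinvg
      rw [map_mul] at hz
      have hz' : MvPolynomial.aeval x (h * h' - 1) = 0 :=
        (mul_eq_zero.mp hz).resolve_right hg
      have e : f = h * f' - (h * h' - 1) * c := by
        rw [hf_def, hf'_def]; ring
      rw [e, map_sub, map_mul, hfx, map_mul, hz']
      ring
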